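/- Let m ≥ 0, δ, ε ∈ ℂ, and let u, y¹, …, yᵐ : ℝ² → ℤ → ℂ be functions of (x, t), differentiable in t, satisfying for all n: ∂ₜuₙ = uₙ(uₙ₊₁(uₙ₊₂ + uₙ₊₁ + uₙ) − uₙ₋₁(uₙ + uₙ₋₁ + uₙ₋₂)) and ∂ₜyʲₙ = uₙ(uₙ₊₁(yʲₙ₊₂ − yʲₙ) + (uₙ₊₁ + 2uₙ + uₙ₋₁)(yʲₙ₊₁ − yʲₙ₋₁) + uₙ₋₁(yʲₙ − yʲₙ₋₂)) for j = 1, …, m. Define Cₙ = 4t·uₙ(uₙ₊₁ + uₙ + uₙ₋₁) + 2x·uₙ + n − δ + (−1)ⁿε − (y¹ₙ + … + yᵐₙ). Then for all n: ∂ₜCₙ = uₙ(uₙ₊₁(Cₙ₊₂ − Cₙ) + (uₙ₊₁ + 2uₙ + uₙ₋₁)(Cₙ₊₁ − Cₙ₋₁) + uₙ₋₁(Cₙ − Cₙ₋₂)). In particular, the constraint Cₙ = 0 for all n is preserved by the t-flow. -/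

import Mathlib

/-- the non-autonomous constraint
`Cₙ = 4tuₙ(uₙ₊₁+uₙ+uₙ₋₁) + 2xuₙ + n − δ + (−1)ⁿε − Σⱼ yʲₙ`
satisfies the linearized equation of the first higher symmetry along the
`t`-flow, so the constraint `Cₙ = 0` is preserved by the `t`-flow. -/
theorem volterra_nonautonomous_constraint_t_flow
    (m : ℕ) (δ ε : ℂ) (u : ℝ → ℝ → ℤ → ℂ) (y : Fin m → ℝ → ℝ → ℤ → ℂ)
    (hu : ∀ (x t : ℝ) (n : ℤ), HasDerivAt (fun t => u x t n)
      (u x t n * (u x t (n + 1) * (u x t (n + 2) + u x t (n + 1) + u x t n)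
        - u x t (n - 1) * (u x t n + u x t (n - 1) + u x t (n - 2)))) t)
    (hy : ∀ (j : Fin m) (x t : ℝ) (n : ℤ), HasDerivAt (fun t => y j x t n)
      (u x t n * (u x t (n + 1) * (y j x t (n + 2) - y j x t n)
        + (u x t (n + 1) + 2 * u x t n + u x t (n - 1))
            * (y j x t (n + 1) - y j x t (n - 1))
        + u x t (n - 1) * (y j x t n - y j x t (n - 2)))) t)
    (C : ℝ → ℝ → ℤ → ℂ)
    (hC : ∀ (x t : ℝ) (n : ℤ), C x t n =
      4 * t * u x t n * (u x t (n + 1) + u x t n + u x t (n - 1))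
        + 2 * x * u x t n + (n : ℂ) - δ + (-1 : ℂ) ^ n * ε
        - ∑ j : Fin m, y j x t n) :
    ∀ (x t : ℝ) (n : ℤ), HasDerivAt (fun t => C x t n)
      (u x t n * (u x t (n + 1) * (C x t (n + 2) - C x t n)
        + (u x t (n + 1) + 2 * u x t n + u x t (n - 1))
            * (C x t (n + 1) - C x t (n - 1))
        + u x t (n - 1) * (C x t n - C x t (n - 2)))) t := by
  intro x t n
  simp only [hC]
  have hre : HasDerivAt (fun s : ℝ => (s : ℂ)) 1 t := by
    simpa using (hasDerivAt_id t).ofReal_comp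
  have Hsum : HasDerivAt (fun s : ℝ => ∑ j : Fin m, y j x s n)
      (∑ j : Fin m, u x t n * (u x t (n + 1) * (y j x t (n + 2) - y j x t n)
        + (u x t (n + 1) + 2 * u x t n + u x t (n - 1))
            * (y j x t (n + 1) - y j x t (n - 1))
        + u x t (n - 1) * (y j x t n - y j x t (n - 2)))) t :=
    HasDerivAt.fun_sum fun j _ => hy j x t n
  have H := ((((((hre.const_mul (4:ℂ)).mul (hu x t n)).mul
      (((hu x t (n+1)).add (hu x t n)).add (hu x t (n-1)))).add
      ((hu x t n).const_mul (2*(x:ℂ)))).add_const ((n:ℂ))).sub_const δ).add_const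
      ((-1:ℂ)^n * ε) |>.sub Hsum
  refine H.congr_deriv ?_
  have hz2 : ((-1:ℂ)) ^ (n+2) = (-1)^n := by
    rw [zpow_add₀ (by norm_num : (-1:ℂ) ≠ 0)]; norm_num
  have hz1 : ((-1:ℂ)) ^ (n+1) = -(-1)^n := by
    rw [zpow_add₀ (by norm_num : (-1:ℂ) ≠ 0)]; norm_num
  have hzm1 : ((-1:ℂ)) ^ (n-1) = -(-1)^n := by
    rw [zpow_sub₀ (by norm_num : (-1:ℂ) ≠ 0)]; norm_num; ring
  have hzm2 : ((-1:ℂ)) ^ (n-2) = (-1)^n := by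
    rw [zpow_sub₀ (by norm_num : (-1:ℂ) ≠ 0)]; norm_num
  simp only [show n+1+1 = n+2 from by ring, show n+1+2 = n+3 from by ring,
    show n+1-1 = n from by ring, show n+1-2 = n-1 from by ring,
    show n-1+1 = n from by ring, show n-1+2 = n+1 from by ring,
    show n-1-1 = n-2 from by ring, show n-1-2 = n-3 from by ring,
    show n+2+1 = n+3 from by ring, show n+2-1 = n+1 from by ring,
    show n-2+1 = n-1 from by ring, show n-2-1 = n-3 from by ring,
    hz2, hz1, hzm1, hzm2]
  push_cast
  simp only [Pi.add_apply, Pi.mul_apply, mul_add, mul_sub, add_mul, sub_mul, Finset.sum_add_distrib,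
    Finset.sum_sub_distrib, ← Finset.mul_sum]
  ring
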